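/- Let M be a left A-module with a flat connection ∇_M with respect to the universal differential calculus, with induced right operation m·a := a m − Σ m_A a m_M, and let N be any left A-module. Then the map c̃: M⊗N → N⊗M, c̃(m⊗n) = n⊗m − Σ m_A n ⊗ m_M, is balanced over A: c̃((m·a)⊗n) = c̃(m⊗(a n)) for all a ∈ A, m ∈ M, n ∈ N. -/
import Mathlib


open TensorProduct

variable (K A M : Type*) [Field K] [Ring A] [Algebra K A]
  [AddCommGroup M] [Module K M] [Module A M] [IsScalarTower K A M]

/-- The action map `A ⊗ M → M`, `a ⊗ m ↦ a • m`. -/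
noncomputable def actMap : A ⊗[K] M →ₗ[K] M :=
  TensorProduct.lift (LinearMap.mk₂ K (fun a m => a • m)
    (fun a b m => add_smul a b m)
    (fun k a m => smul_assoc k a m)
    (fun a m n => smul_add a m n)
    (fun k a m => (smul_comm k a m).symm))

/-- Left multiplication by `a : A` on a left `A`-module, as a `K`-linear map. -/
def lsmulMap (a : A) : M →ₗ[K] M where
  toFun := fun m => a • m
  map_add' := fun x y => smul_add a x y
  map_smul' := fun k m => (smul_comm k a m).symm

/-- `a ↦ a • n` as a `K`-linear map `A → M`. -/
def smulBy (n : M) : A →ₗ[K] M where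
  toFun := fun a => a • n
  map_add' := fun a b => add_smul a b n
  map_smul' := fun k a => smul_assoc k a n

/-- `D : M → A ⊗ M` is a connection with respect to the universal differential
calculus. -/
def IsConnection (D : M →ₗ[K] A ⊗[K] M) : Prop :=
  (∀ m : M, actMap K A M (D m) = 0) ∧
  ∀ (a : A) (m : M),
    D (a • m) = LinearMap.rTensor M (LinearMap.mulLeft K a) (D m)
      + (1 : A) ⊗ₜ[K] (a • m) - a ⊗ₜ[K] m

/-- Flatness of a connection: `Σ 1 ⊗ m_A ⊗ m_M = Σ m_A ⊗ D(m_M)`. -/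
def IsFlatConnection (D : M →ₗ[K] A ⊗[K] M) : Prop :=
  ∀ m : M, (1 : A) ⊗ₜ[K] (D m) = LinearMap.lTensor A D (D m)

/-- The induced right operation `m·a := a m − Σ m_A a m_M`. -/
noncomputable def rop (D : M →ₗ[K] A ⊗[K] M) (m : M) (a : A) : M :=
  a • m - actMap K A M (LinearMap.rTensor M (LinearMap.mulRight K a) (D m))

variable (N : Type*) [AddCommGroup N] [Module K N] [Module A N] [IsScalarTower K A N]

/-- The map `N ⊗ A → N`, `n ⊗ a ↦ a • n`. -/
noncomputable def ract : N ⊗[K] A →ₗ[K] N :=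
  TensorProduct.lift (LinearMap.mk₂ K (fun n a => a • n)
    (fun n₁ n₂ a => smul_add a n₁ n₂)
    (fun k n a => (smul_comm k a n).symm)
    (fun n a b => add_smul a b n)
    (fun k n a => smul_assoc k a n))

/-- The map `c̃ : M ⊗ N → N ⊗ M`, `m ⊗ n ↦ n ⊗ m − Σ (m_A • n) ⊗ m_M`, associated
with a connection `D` on `M`. -/
noncomputable def ctMap (D : M →ₗ[K] A ⊗[K] M) : M ⊗[K] N →ₗ[K] N ⊗[K] M :=
  (LinearMap.id - (LinearMap.rTensor M (ract K A N)).comp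
      (((TensorProduct.assoc K N A M).symm.toLinearMap).comp
        (LinearMap.lTensor N D))).comp
    (TensorProduct.comm K M N).toLinearMap


section Aux

variable {K A M N}

/-- Auxiliary map `A ⊗ (A ⊗ M) → A ⊗ M`, `x ⊗ (y ⊗ z) ↦ (x * a * y) ⊗ z`. -/
noncomputable def fMap (a : A) : A ⊗[K] (A ⊗[K] M) →ₗ[K] A ⊗[K] M :=
  (LinearMap.rTensor M ((LinearMap.mul' K A).comp
      (LinearMap.rTensor A (LinearMap.mulRight K a)))).comp
    (TensorProduct.assoc K A A M).symm.toLinearMap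

lemma fMap_tmul (a x : A) (s : A ⊗[K] M) :
    fMap a (x ⊗ₜ[K] s) = LinearMap.rTensor M (LinearMap.mulLeft K (x * a)) s := by
  induction s using TensorProduct.induction_on with
  | zero => simp
  | tmul y z => simp [fMap, mul_assoc]
  | add s₁ s₂ h₁ h₂ => rw [TensorProduct.tmul_add, map_add, h₁, map_add, h₂]

/-- Auxiliary map `A ⊗ M → N ⊗ M`, `x ⊗ y ↦ (x • n) ⊗ y`. -/
noncomputable def gMap (n : N) : A ⊗[K] M →ₗ[K] N ⊗[K] M :=
  (LinearMap.rTensor M (ract K A N)).comp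
    ((TensorProduct.assoc K N A M).symm.toLinearMap.comp
      (TensorProduct.mk K N (A ⊗[K] M) n))

lemma gMap_tmul (n : N) (x : A) (y : M) :
    gMap (K := K) n (x ⊗ₜ[K] y) = (x • n) ⊗ₜ[K] y := by
  simp [gMap, ract]

lemma gMap_rTensor (a : A) (n : N) (s : A ⊗[K] M) :
    gMap (K := K) n (LinearMap.rTensor M (LinearMap.mulRight K a) s)
      = gMap (K := K) (a • n) s := by
  induction s using TensorProduct.induction_on with
  | zero => simp
  | tmul x y => rw [LinearMap.rTensor_tmul, gMap_tmul, gMap_tmul]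
                simp [LinearMap.mulRight, mul_smul]
  | add s₁ s₂ h₁ h₂ => rw [map_add, map_add, h₁, h₂, map_add]

lemma ctMap_tmul (D : M →ₗ[K] A ⊗[K] M) (m : M) (n : N) :
    ctMap K A M N D (m ⊗ₜ[K] n) = n ⊗ₜ[K] m - gMap (K := K) n (D m) := by
  simp [ctMap, gMap]

lemma leibniz_act (D : M →ₗ[K] A ⊗[K] M) (hconn : IsConnection K A M D) (a : A)
    (t : A ⊗[K] M) :
    D (actMap K A M (LinearMap.rTensor M (LinearMap.mulRight K a) t))
      = fMap a (LinearMap.lTensor A D t)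
        + (1 : A) ⊗ₜ[K] actMap K A M (LinearMap.rTensor M (LinearMap.mulRight K a) t)
        - LinearMap.rTensor M (LinearMap.mulRight K a) t := by
  induction t using TensorProduct.induction_on with
  | zero => simp
  | tmul x y =>
      rw [LinearMap.rTensor_tmul, LinearMap.lTensor_tmul, fMap_tmul]
      have h := hconn.2 (x * a) y
      simpa [actMap, LinearMap.mulRight, mul_smul] using h
  | add t₁ t₂ h₁ h₂ =>
      rw [map_add, map_add, map_add, map_add, map_add, h₁, h₂,
        TensorProduct.tmul_add]
      abel

lemma D_rop (D : M →ₗ[K] A ⊗[K] M) (hconn : IsConnection K A M D)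
    (hflat : IsFlatConnection K A M D) (a : A) (m : M) :
    D (rop K A M D m a)
      = (1 : A) ⊗ₜ[K] (rop K A M D m a) - a ⊗ₜ[K] m
        + LinearMap.rTensor M (LinearMap.mulRight K a) (D m) := by
  have h1 := hconn.2 a m
  have h2 := leibniz_act D hconn a (D m)
  rw [← hflat m, fMap_tmul, one_mul] at h2
  simp only [rop]
  rw [map_sub, h1, h2, TensorProduct.tmul_sub]
  abel

end Aux

/-- For a flat connection `D` on `M`, the map
`c̃ : M ⊗ N → N ⊗ M`, `m ⊗ n ↦ n ⊗ m − Σ m_A n ⊗ m_M`, is balanced over `A`: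
`c̃((m·a) ⊗ n) = c̃(m ⊗ (a n))`. -/
theorem ctMap_balanced (D : M →ₗ[K] A ⊗[K] M) (hconn : IsConnection K A M D)
    (hflat : IsFlatConnection K A M D) (a : A) (m : M) (n : N) :
    ctMap K A M N D ((rop K A M D m a) ⊗ₜ[K] n) = ctMap K A M N D (m ⊗ₜ[K] (a • n)) := by
  rw [ctMap_tmul, ctMap_tmul, D_rop D hconn hflat, map_add, map_sub,
    gMap_rTensor]
  have h1 : gMap (K := K) n ((1 : A) ⊗ₜ[K] rop K A M D m a)
      = n ⊗ₜ[K] rop K A M D m a := by rw [gMap_tmul, one_smul]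
  have h2 : gMap (K := K) n (a ⊗ₜ[K] m) = (a • n) ⊗ₜ[K] m := gMap_tmul n a m
  rw [h1, h2]
  abel
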